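/- arXiv:1704.02189 — 2 statements merged into one kernel-verified Lean document; each statement's English description precedes it below -/
import Mathlib

section
/- Let b_M, k_M, b_E, k_E > 0 with k_M b_M > k_E b_E, let T > 2(k_M b_M - k_E b_E)/(b_M k_M k_E), and set τ₁ = T - 2(k_M b_M - k_E b_E)/(b_M k_M k_E). Then for all t in [0, τ₁), e^{k_E(τ₁ - t)} ((1/2) b_M k_M k_E (T - τ₁)^2 + b_E k_E (T - τ₁) + b_E) > b_M k_M (T - τ₁) + b_M k_M (τ₁ - t) + b_E. -/
open Real

theorem exp_arc_pointwise_optimality (b_M k_M b_E k_E T : ℝ)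
    (hbM : 0 < b_M) (hkM : 0 < k_M) (hbE : 0 < b_E) (hkE : 0 < k_E)
    (hdom : k_M * b_M > k_E * b_E)
    (hT : T > 2 * (k_M * b_M - k_E * b_E) / (b_M * k_M * k_E)) :
    let τ₁ := T - 2 * (k_M * b_M - k_E * b_E) / (b_M * k_M * k_E)
    ∀ t ∈ Set.Ico (0:ℝ) τ₁,
      Real.exp (k_E * (τ₁ - t)) *
        ((1/2) * b_M * k_M * k_E * (T - τ₁)^2 + b_E * k_E * (T - τ₁) + b_E) >
      b_M * k_M * (T - τ₁) + b_M * k_M * (τ₁ - t) + b_E := by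
  intro τ₁ t ht
  obtain ⟨ht0, htτ⟩ := ht
  have hτ : τ₁ = T - 2 * (k_M * b_M - k_E * b_E) / (b_M * k_M * k_E) := rfl
  clear_value τ₁
  have hspos : 0 < τ₁ - t := by linarith
  have hD : b_M * k_M * k_E * (T - τ₁) = 2 * (k_M * b_M - k_E * b_E) := by
    have h : b_M * k_M * k_E ≠ 0 := by positivity
    rw [hτ]
    field_simp
    ring
  have hDpos : 0 < T - τ₁ := by
    have h : 0 < b_M * k_M * k_E := by positivity
    nlinarith
  have hid : (1/2) * b_M * k_M * k_E * (T - τ₁)^2 + b_E * k_E * (T - τ₁)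
      = b_M * k_M * (T - τ₁) := by
    linear_combination ((T - τ₁)/2) * hD
  have hC : 0 < (1/2) * b_M * k_M * k_E * (T - τ₁)^2 + b_E * k_E * (T - τ₁) + b_E := by
    positivity
  have hexp : k_E * (τ₁ - t) + 1 < Real.exp (k_E * (τ₁ - t)) :=
    Real.add_one_lt_exp (by positivity : (0:ℝ) < k_E * (τ₁ - t)).ne'
  have hkC : b_M * k_M < k_E * ((1/2) * b_M * k_M * k_E * (T - τ₁)^2 + b_E * k_E * (T - τ₁) + b_E) := by
    nlinarith [hD, hid]
  nlinarith [mul_lt_mul_of_pos_right hexp hC, mul_lt_mul_of_pos_left hkC hspos]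
end

section
/- Let a_E ≥ a_M > 0, b_M, k_M, b_E, k_E > 0, and 0 < τ_s < T. If (a_E/a_M - 1) b_E k_E T ≥ (1/2) b_M k_M k_E τ_s² + ((a_E/a_M) b_E k_E - b_M k_M) τ_s, then for all t in [0, τ_s): -(1/2) b_M k_M k_E (τ_s - t)² + (b_M k_M - b_E k_E)(τ_s - t) + (a_E/a_M - 1) b_E k_E (T - τ_s) ≥ 0. -/
theorem linear_stationary_pointwise (a_E a_M b_M k_M b_E k_E τ_s T : ℝ)
    (haM : 0 < a_M) (haEM : a_M ≤ a_E)
    (hbM : 0 < b_M) (hkM : 0 < k_M) (hbE : 0 < b_E) (hkE : 0 < k_E)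
    (hτ : 0 < τ_s) (hτT : τ_s < T)
    (h : (a_E / a_M - 1) * b_E * k_E * T ≥
        (1/2) * b_M * k_M * k_E * τ_s^2 + ((a_E / a_M) * b_E * k_E - b_M * k_M) * τ_s) :
    ∀ t ∈ Set.Ico (0:ℝ) τ_s,
      -(1/2) * b_M * k_M * k_E * (τ_s - t)^2 + (b_M * k_M - b_E * k_E) * (τ_s - t) +
        (a_E / a_M - 1) * b_E * k_E * (T - τ_s) ≥ 0 := by
  intro t ht
  obtain ⟨ht0, htτ⟩ := ht
  have h1 : 1 ≤ a_E / a_M := (one_le_div haM).mpr haEM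
  have hf0 : (a_E / a_M - 1) * b_E * k_E * (T - τ_s) ≥ 0 :=
    mul_nonneg (mul_nonneg (mul_nonneg (by linarith) hbE.le) hkE.le) (by linarith)
  have hfτ : -(1/2) * b_M * k_M * k_E * τ_s^2 + (b_M * k_M - b_E * k_E) * τ_s +
      (a_E / a_M - 1) * b_E * k_E * (T - τ_s) ≥ 0 := by nlinarith
  have hkey : (1/2) * b_M * k_M * k_E * τ_s * (τ_s - t) * t ≥ 0 := by
    apply mul_nonneg _ ht0
    apply mul_nonneg _ (sub_pos.mpr htτ).le
    positivity
  nlinarith [hfτ, hf0, hkey, sub_pos.mpr htτ, mul_nonneg ht0 (le_of_lt (sub_pos.mpr htτ))]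
end
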